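/- (Elliptic Potential Lemma) Let V_0 ∈ ℝ^{d×d} be positive definite and let a_1, ..., a_n ∈ ℝ^d be vectors with ‖a_t‖₂ ≤ L < ∞ for all t ∈ {1,...,n}. Define V_t = V_0 + Σ_{s=1}^t a_s a_s^T. Then Σ_{t=1}^n min{1, ‖a_t‖²_{V_{t-1}^{-1}}} ≤ 2d · log( (tr(V_0) + nL²) / (d · det(V_0)^{1/d}) ), where ‖v‖²_M = v^T M v. -/

import Mathlib

open Matrix

private lemma min_le_two_log {x : ℝ} (hx : 0 ≤ x) : min 1 x ≤ 2 * Real.log (1 + x) := by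
  have h1x : (0:ℝ) < 1 + x := by linarith
  have hlog : x / (1 + x) ≤ Real.log (1 + x) := by
    have h := Real.log_le_sub_one_of_pos (x := (1+x)⁻¹) (by positivity)
    rw [Real.log_inv] at h
    have h2 : (1+x)⁻¹ - 1 = -(x/(1+x)) := by field_simp; ring
    linarith [h2 ▸ h]
  rcases le_total x 1 with h | h
  · rw [min_eq_right h]
    have hx2 : x ≤ 2 * (x / (1+x)) := by
      rw [mul_div_assoc', le_div_iff₀ h1x]
      nlinarith
    linarith
  · rw [min_eq_left h]
    have hx2 : (1:ℝ) ≤ 2 * (x / (1+x)) := by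
      rw [mul_div_assoc', le_div_iff₀ h1x]
      linarith
    linarith

private lemma outer_psd {d : ℕ} (a : Fin d → ℝ) : (Matrix.vecMulVec a a).PosSemidef := by
  refine Matrix.PosSemidef.of_dotProduct_mulVec_nonneg ?_ ?_
  · ext i j
    simp [conjTranspose_apply, vecMulVec_apply, mul_comm]
  · intro x
    have h : star x ⬝ᵥ (Matrix.vecMulVec a a *ᵥ x) = (a ⬝ᵥ x)^2 := by
      simp only [star_trivial, dotProduct, mulVec, vecMulVec_apply, sq]
      rw [Finset.sum_mul_sum]
      refine Finset.sum_congr rfl fun i _ => ?_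
      rw [Finset.mul_sum]
      exact Finset.sum_congr rfl fun j _ => by ring
    rw [h]
    positivity

theorem elliptic_potential_lemma
    (d n : ℕ) (hd : 1 ≤ d)
    (V0 : Matrix (Fin d) (Fin d) ℝ) (hV0 : V0.PosDef)
    (L : ℝ) (hL : 0 < L)
    (a : Fin n → Fin d → ℝ)
    (ha : ∀ t : Fin n, Real.sqrt (∑ i, (a t i) ^ 2) ≤ L)
    (V : ℕ → Matrix (Fin d) (Fin d) ℝ)
    (hV : ∀ t : ℕ, V t = V0 +
      ∑ s ∈ Finset.univ.filter (fun s : Fin n => (s : ℕ) < t),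
        Matrix.vecMulVec (a s) (a s)) :
    ∑ t : Fin n, min 1 (a t ⬝ᵥ ((V t)⁻¹ *ᵥ a t)) ≤
      2 * d * Real.log ((V0.trace + n * L ^ 2) / (d * V0.det ^ ((1 : ℝ) / d))) := by
  have hd0 : (0:ℝ) < d := by exact_mod_cast hd
  set u : Fin n → ℝ := fun t => a t ⬝ᵥ ((V t)⁻¹ *ᵥ a t) with hu
  -- positive definiteness of all V t
  have hVt : ∀ t : ℕ, (V t).PosDef := by
    intro t
    rw [hV t]
    refine hV0.add_posSemidef ?_
    refine Finset.sum_induction _ _ (fun A B hA hB => hA.add hB) ?_ (fun s _ => outer_psd _)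
    exact Matrix.PosSemidef.zero
  -- u nonneg
  have hu0 : ∀ t : Fin n, 0 ≤ u t := by
    intro t
    simpa using ((hVt t).inv).posSemidef.dotProduct_mulVec_nonneg (a t)
  -- filter splitting
  have hfilter : ∀ t : Fin n,
      (Finset.univ.filter (fun s : Fin n => (s:ℕ) < (t:ℕ)+1)) =
        insert t (Finset.univ.filter (fun s : Fin n => (s:ℕ) < (t:ℕ))) := by
    intro t
    ext s
    simp only [Finset.mem_filter, Finset.mem_univ, true_and, Finset.mem_insert,
      Nat.lt_succ_iff_lt_or_eq, Fin.val_eq_val]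
    tauto
  -- determinant recursion
  have hstep : ∀ t : Fin n, (V ((t:ℕ)+1)).det = (V t).det * (1 + u t) := by
    intro t
    have hVsucc : V ((t:ℕ)+1) = V t + Matrix.vecMulVec (a t) (a t) := by
      rw [hV, hV, hfilter t, Finset.sum_insert (by simp)]
      abel
    rw [hVsucc, Matrix.vecMulVec_eq Unit,
      Matrix.det_add_replicateCol_mul_replicateRow (hVt t).det_pos.ne'.isUnit]
    congr 1
    rw [det_unique]
    simp only [Matrix.add_apply, Matrix.one_apply_eq, Matrix.mul_apply, Matrix.replicateRow_apply,
      Matrix.replicateCol_apply, hu, dotProduct, mulVec, Finset.sum_mul, Finset.mul_sum]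
    congr 1
    rw [Finset.sum_comm]
    exact Finset.sum_congr rfl fun i _ => Finset.sum_congr rfl fun j _ => by ring
  -- determinant product formula
  have hdet : ∀ k, k ≤ n → (V k).det =
      V0.det * ∏ t ∈ Finset.univ.filter (fun t : Fin n => (t:ℕ) < k), (1 + u t) := by
    intro k
    induction k with
    | zero => intro _; simp [hV 0]
    | succ k ih =>
      intro hk
      have hkn : k < n := hk
      have h1 := hstep ⟨k, hkn⟩
      rw [h1, ih (le_of_lt hkn), hfilter ⟨k, hkn⟩, Finset.prod_insert (by simp)]
      ring
  have hdetn : (V n).det = V0.det * ∏ t : Fin n, (1 + u t) := by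
    have h := hdet n le_rfl
    rwa [Finset.filter_true_of_mem (fun t _ => t.isLt)] at h
  -- positivity facts
  have h1u : ∀ t : Fin n, (0:ℝ) < 1 + u t := fun t => by linarith [hu0 t]
  have hdet0 : 0 < V0.det := hV0.det_pos
  have hdetnpos : 0 < (V n).det := (hVt n).det_pos
  -- log of determinant
  have hlogdet : Real.log ((V n).det) = Real.log V0.det + ∑ t : Fin n, Real.log (1 + u t) := by
    rw [hdetn, Real.log_mul hdet0.ne' (Finset.prod_pos fun t _ => h1u t).ne', Real.log_prod]
    intro t _
    exact (h1u t).ne'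
  -- trace bound
  have htrsq : ∀ t : Fin n, (Matrix.vecMulVec (a t) (a t)).trace ≤ L^2 := by
    intro t
    have hnn : 0 ≤ ∑ i, (a t i)^2 := by positivity
    have h1 : ∑ i, (a t i)^2 ≤ L^2 := by
      nlinarith [Real.sq_sqrt hnn, ha t, Real.sqrt_nonneg (∑ i, (a t i)^2)]
    simpa [Matrix.trace, Matrix.diag, vecMulVec_apply, sq] using h1
  have htr : (V n).trace ≤ V0.trace + n * L^2 := by
    rw [hV n, Matrix.trace_add, Matrix.trace_sum,
      Finset.filter_true_of_mem (fun t _ => t.isLt)]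
    have := Finset.sum_le_card_nsmul Finset.univ
      (fun t : Fin n => (Matrix.vecMulVec (a t) (a t)).trace) (L^2) (fun t _ => htrsq t)
    simp only [Finset.card_univ, Fintype.card_fin, nsmul_eq_mul] at this
    linarith
  -- trace of V n is positive (via eigenvalues, below we only need nonneg)
  have hH : (V n).IsHermitian := (hVt n).isHermitian
  set lam : Fin d → ℝ := hH.eigenvalues with hlam
  have hlamnn : ∀ i, 0 ≤ lam i := fun i => (hVt n).posSemidef.eigenvalues_nonneg i
  have htre : (V n).trace = ∑ i, lam i := by
    nth_rewrite 1 [hH.spectral_theorem]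
    rw [Unitary.conjStarAlgAut_apply, Matrix.trace_mul_cycle, Matrix.mem_unitaryGroup_iff'.mp hH.eigenvectorUnitary.2,
      Matrix.one_mul, Matrix.trace_diagonal]
    simp [hlam]
  have hdete : (V n).det = ∏ i, lam i := by
    have h := hH.det_eq_prod_eigenvalues
    simpa using h
  have htrnn : 0 ≤ (V n).trace := by
    rw [htre]; exact Finset.sum_nonneg fun i _ => hlamnn i
  -- AM-GM
  have hAMGM : (V n).det ≤ ((V n).trace / d)^d := by
    have hw : ∑ _i : Fin d, (1/(d:ℝ)) = 1 := by
      simp [Finset.card_univ]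
      field_simp
    have hgm := Real.geom_mean_le_arith_mean_weighted Finset.univ
      (fun _ => 1/(d:ℝ)) lam (fun i _ => one_div_nonneg.mpr hd0.le) hw (fun i _ => hlamnn i)
    have hprod : (V n).det = (∏ i, lam i ^ (1/(d:ℝ)))^d := by
      rw [hdete, ← Finset.prod_pow]
      refine Finset.prod_congr rfl fun i _ => ?_
      rw [← Real.rpow_natCast (lam i ^ (1/(d:ℝ))) d, ← Real.rpow_mul (hlamnn i),
        one_div_mul_cancel hd0.ne', Real.rpow_one]
    have hsum : ∑ i, (1/(d:ℝ)) * lam i = (V n).trace / d := by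
      rw [htre, Finset.sum_div]
      exact Finset.sum_congr rfl fun i _ => by ring
    rw [hprod, ← hsum]
    exact pow_le_pow_left₀ (Finset.prod_nonneg fun i _ => Real.rpow_nonneg (hlamnn i) _) hgm d
  -- trace of V0 is positive
  have hdiag : ∀ i, 0 < V0 i i := by
    intro i
    have hne : (Pi.single i 1 : Fin d → ℝ) ≠ 0 := by
      intro h; simpa using congrFun h i
    have h := hV0.dotProduct_mulVec_pos hne
    simpa [mulVec_single, single_dotProduct] using h
  have htr0 : 0 < V0.trace := by
    have hne : Nonempty (Fin d) := ⟨⟨0, hd⟩⟩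
    exact Finset.sum_pos (fun i _ => hdiag i) Finset.univ_nonempty
  have hT : 0 < V0.trace + n * L^2 := by positivity
  -- log determinant bound
  have hdlog : Real.log ((V n).det) ≤ d * Real.log ((V0.trace + n*L^2)/d) := by
    have h1 : (V n).det ≤ ((V0.trace + n*L^2)/d)^d :=
      hAMGM.trans (pow_le_pow_left₀ (div_nonneg htrnn hd0.le)
        ((div_le_div_iff_of_pos_right hd0).2 htr) d)
    calc Real.log ((V n).det) ≤ Real.log (((V0.trace + n*L^2)/d)^d) :=
          Real.log_le_log hdetnpos h1
      _ = d * Real.log ((V0.trace+n*L^2)/d) := by rw [Real.log_pow]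
  -- final chain
  calc ∑ t : Fin n, min 1 (u t)
      ≤ ∑ t : Fin n, 2 * Real.log (1 + u t) :=
        Finset.sum_le_sum fun t _ => min_le_two_log (hu0 t)
    _ = 2 * (Real.log ((V n).det) - Real.log V0.det) := by
        rw [← Finset.mul_sum, hlogdet]; ring
    _ ≤ 2 * (d * Real.log ((V0.trace + n*L^2)/d) - Real.log V0.det) := by
        linarith
    _ = 2 * d * Real.log ((V0.trace + n * L ^ 2) / (d * V0.det ^ ((1:ℝ)/d))) := by
        rw [Real.log_div hT.ne' hd0.ne',
          Real.log_div hT.ne'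
            (show ((d:ℝ) * V0.det ^ ((1:ℝ)/(d:ℝ))) ≠ 0 by positivity),
          Real.log_mul hd0.ne' (Real.rpow_pos_of_pos hdet0 _).ne',
          Real.log_rpow hdet0]
        field_simp
        ring
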